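/- For every real x ≥ 0, the series ∑_{n=1}^∞ (1/n) (x²/(1+x²))^(n/2) · sin( n · arcsin( 1/√(1+x²) ) ) converges and its sum equals arctan(x). -/

import Mathlib

open Complex in
private lemma aux_div_im (a b c d : ℝ) :
    ((a:ℂ) * ((b:ℂ) + (c:ℂ)*I) / (d:ℂ)).im = a*c/d := by
  simp [Complex.div_im, Complex.normSq_ofReal, Complex.div_re]
  rcases eq_or_ne d 0 with h | h
  · simp [h]
  · field_simp

open Complex in
private lemma aux_re (a b : ℝ) : ((a:ℂ) + (b:ℂ)*I).re = a := by simp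

open Complex in
private lemma aux_im (a b : ℝ) : ((a:ℂ) + (b:ℂ)*I).im = b := by simp

theorem arctan_series_nonneg (x : ℝ) (hx : 0 ≤ x) :
    HasSum (fun n : ℕ =>
      (1 / ((n : ℝ) + 1)) * (x ^ 2 / (1 + x ^ 2)) ^ (((n : ℝ) + 1) / 2) *
        Real.sin (((n : ℝ) + 1) * Real.arcsin (1 / Real.sqrt (1 + x ^ 2))))
      (Real.arctan x) := by
  have hp : (0:ℝ) < 1 + x ^ 2 := by positivity
  set s : ℝ := Real.sqrt (1 + x ^ 2) with hs_def
  have hs : 0 < s := Real.sqrt_pos.2 hp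
  have hs2 : s ^ 2 = 1 + x ^ 2 := Real.sq_sqrt hp.le
  have hs1 : 1 ≤ s := by nlinarith
  set θ : ℝ := Real.arcsin (1 / s) with hθ_def
  have hsinθ : Real.sin θ = 1 / s := by
    apply Real.sin_arcsin
    · have : (0:ℝ) < 1 / s := by positivity
      linarith
    · rw [div_le_one hs]; exact hs1
  have hcosθ : Real.cos θ = x / s := by
    rw [hθ_def, Real.cos_arcsin]
    rw [div_pow, one_pow, hs2]
    have h : 1 - 1 / (1 + x ^ 2) = x ^ 2 / (1 + x ^ 2) := by field_simp; ring
    rw [h, Real.sqrt_div (sq_nonneg x), Real.sqrt_sq hx, ← hs_def]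
  set r : ℝ := x / s with hr_def
  have hr0 : 0 ≤ r := by positivity
  have hr1 : r < 1 := by
    rw [hr_def, div_lt_one hs]
    nlinarith
  set z : ℂ := (r : ℂ) * Complex.exp (θ * Complex.I) with hz_def
  have hznorm : ‖z‖ < 1 := by
    rw [hz_def]
    simp only [norm_mul, Complex.norm_real, Complex.norm_exp]
    simp [_root_.abs_of_nonneg hr0]
    exact hr1
  have h1 := Complex.hasSum_taylorSeries_neg_log hznorm
  have h2 : HasSum (fun n : ℕ => z ^ (n + 1) / ((n : ℂ) + 1)) (-Complex.log (1 - z)) := by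
    have := (hasSum_nat_add_iff' (f := fun n : ℕ => z ^ n / n) 1).2 h1
    simpa using this
  have h3 := Complex.hasSum_im h2
  have hterm : ∀ n : ℕ, (z ^ (n + 1) / ((n:ℂ) + 1)).im =
      (1 / ((n : ℝ) + 1)) * (x ^ 2 / (1 + x ^ 2)) ^ (((n : ℝ) + 1) / 2) *
        Real.sin (((n : ℝ) + 1) * θ) := by
    intro n
    have hzpow : z ^ (n + 1) = ((r ^ (n + 1) : ℝ) : ℂ) *
        (((Real.cos (((n:ℝ)+1) * θ) : ℝ) : ℂ) + ((Real.sin (((n:ℝ)+1) * θ) : ℝ) : ℂ) * Complex.I) := by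
      rw [hz_def, mul_pow, ← Complex.exp_nat_mul]
      have harg : ((n + 1 : ℕ) : ℂ) * (↑θ * Complex.I) = ((((n:ℝ)+1) * θ : ℝ) : ℂ) * Complex.I := by
        push_cast; ring
      rw [harg, Complex.exp_mul_I, ← Complex.ofReal_cos, ← Complex.ofReal_sin,
        Complex.ofReal_pow]
    have hcast : ((n:ℂ) + 1) = ((((n:ℝ)) + 1 : ℝ) : ℂ) := by push_cast; ring
    rw [hzpow, hcast, aux_div_im]
    have hrpow : (x ^ 2 / (1 + x ^ 2)) ^ (((n : ℝ) + 1) / 2) = r ^ (n + 1) := by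
      have hxr : x ^ 2 / (1 + x ^ 2) = r ^ 2 := by
        rw [hr_def, div_pow, hs2]
      rw [hxr, ← Real.rpow_natCast r 2, ← Real.rpow_mul hr0, ← Real.rpow_natCast r (n+1)]
      congr 1
      push_cast; ring
    rw [hrpow]
    ring
  have h1z : 1 - z = ((1 / (1 + x^2) : ℝ) : ℂ) + ((-(x / (1 + x^2)) : ℝ) : ℂ) * Complex.I := by
    rw [hz_def, Complex.exp_mul_I, ← Complex.ofReal_cos, ← Complex.ofReal_sin, hsinθ, hcosθ]
    rw [Complex.ext_iff]
    constructor
    · simp only [Complex.sub_re, Complex.one_re, Complex.mul_re, Complex.ofReal_re,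
        Complex.ofReal_im, Complex.add_re, Complex.mul_im, Complex.I_re, Complex.I_im,
        Complex.add_im, Complex.mul_I_re, Complex.mul_I_im]
      rw [hr_def]
      field_simp
      nlinarith [hs2, hs]
    · simp only [Complex.sub_im, Complex.one_im, Complex.mul_im, Complex.ofReal_re,
        Complex.ofReal_im, Complex.add_re, Complex.add_im, Complex.mul_re, Complex.I_re,
        Complex.I_im]
      rw [hr_def]
      field_simp
      rw [hs2]
      nlinarith [hs2]
  have hre_eq : (1 - z).re = 1 / (1 + x^2) := by
    rw [h1z, aux_re]
  have him_eq : (1 - z).im = -(x / (1 + x^2)) := by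
    rw [h1z, aux_im]
  have hsum : (-Complex.log (1 - z)).im = Real.arctan x := by
    have hre : 0 ≤ (1 - z).re := by rw [hre_eq]; positivity
    rw [Complex.neg_im, Complex.log_im, Complex.arg_of_re_nonneg hre]
    have habs : ‖1 - z‖ = 1 / s := by
      rw [h1z, Complex.norm_add_mul_I]
      rw [show (1 / (1 + x^2))^2 + (-(x / (1 + x^2)))^2 = (1/s)^2 by field_simp; nlinarith]
      exact Real.sqrt_sq (by positivity)
    rw [habs, him_eq]
    rw [show -(x / (1 + x^2)) / (1/s) = -(x/s) by field_simp; nlinarith]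
    rw [Real.arcsin_neg, neg_neg, Real.arctan_eq_arcsin, ← hs_def]
  simp only [hterm] at h3
  rwa [hsum] at h3
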